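/- Assume $\mu > \hat\mu$, $\rho_0^a = \rho_0^v = \rho_0 > 0$, $0 \le x^a < x^v < 1$, $q \in (0,1)$, $h \in [0,1)$. Then the total cumulative infection $CI = q\,CI^a + (1-q)\,CI^v = 2\rho_0 \frac{\mu - (1-x^a)(\tilde{q}^a - q) - (1-x^v)(\tilde{q}^v - (1-q))}{(T-2\mu-\Delta)(T-2\mu+\Delta)}$ is strictly increasing in $h$. -/
import Mathlib


/-- Assume stability `μ > μ̂(h)` on `[0,1)`, symmetric initial
condition `ρ₀ > 0`, `0 ≤ xa < xv < 1`, `q ∈ (0,1)`.  Then the total cumulative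
infection
`CI(h) = 2ρ₀ (μ - (1-xa)(qa(h) - q) - (1-xv)(qv(h) - (1-q))) / ((T-2μ-Δ)(T-2μ+Δ))`
is strictly increasing in `h` on `[0,1)`. -/
theorem stmt_9 (q xa xv μ ρ0 : ℝ)
    (hq : q ∈ Set.Ioo (0:ℝ) 1)
    (hxa : 0 ≤ xa) (hxav : xa < xv) (hxv : xv < 1)
    (hρ0 : 0 < ρ0)
    (qa qv T Δ μhat CI : ℝ → ℝ)
    (hqa : ∀ h, qa h = h + (1-h)*q) (hqv : ∀ h, qv h = h + (1-h)*(1-q))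
    (hT : ∀ h, T h = qa h*(1-xa) + qv h*(1-xv))
    (hΔ : ∀ h, Δ h = Real.sqrt ((T h)^2 - 4*h*(1-xa)*(1-xv)))
    (hμhat : ∀ h, μhat h = (T h + Δ h)/2)
    (hstab : ∀ h ∈ Set.Ico (0:ℝ) 1, μhat h < μ)
    (hCI : ∀ h, CI h =
      2*ρ0 * (μ - (1-xa)*(qa h - q) - (1-xv)*(qv h - (1-q)))
        / ((T h - 2*μ - Δ h) * (T h - 2*μ + Δ h))) :
    StrictMonoOn CI (Set.Ico (0:ℝ) 1) := by

  obtain ⟨hq0, hq1⟩ := hq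
  have ha : 0 < 1 - xa := by linarith
  have hb : 0 < 1 - xv := by linarith
  -- key facts for every h in [0,1)
  have key : ∀ h ∈ Set.Ico (0:ℝ) 1,
      0 < (T h - 2*μ - Δ h) * (T h - 2*μ + Δ h) ∧
      (T h - 2*μ - Δ h) * (T h - 2*μ + Δ h)
        = 4*(μ^2 - μ*T h + h*(1-xa)*(1-xv)) := by
    intro h hh
    obtain ⟨hh0, hh1⟩ := hh
    have hnn : 0 ≤ (T h)^2 - 4*h*(1-xa)*(1-xv) := by
      rw [hT, hqa, hqv]
      have m1 : 0 ≤ (1-xa)*(1-xv)*((1-h)^2*(q*(1-q))) :=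
        mul_nonneg (mul_nonneg ha.le hb.le)
          (mul_nonneg (sq_nonneg _) (mul_nonneg hq0.le (by linarith)))
      nlinarith [sq_nonneg ((h+(1-h)*q)*(1-xa) - (h+(1-h)*(1-q))*(1-xv)), m1]
    have hΔsq : (Δ h)^2 = (T h)^2 - 4*h*(1-xa)*(1-xv) := by
      rw [hΔ]; exact Real.sq_sqrt hnn
    have hΔnn : 0 ≤ Δ h := by rw [hΔ]; exact Real.sqrt_nonneg _
    have hstab' : (T h + Δ h)/2 < μ := by rw [← hμhat]; exact hstab h ⟨hh0, hh1⟩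
    have f2 : T h - 2*μ + Δ h < 0 := by linarith
    have f1 : T h - 2*μ - Δ h < 0 := by linarith
    exact ⟨mul_pos_of_neg_of_neg f1 f2, by linear_combination -hΔsq⟩
  have hμpos : 0 < μ := by
    have h0 : (0:ℝ) ∈ Set.Ico (0:ℝ) 1 := ⟨le_refl 0, by norm_num⟩
    have := hstab 0 h0
    rw [hμhat] at this
    have hΔnn : 0 ≤ Δ 0 := by rw [hΔ]; exact Real.sqrt_nonneg _
    have hT0 : 0 < T 0 := by
      rw [hT, hqa, hqv]
      have : (0:ℝ) + (1-0)*q = q := by ring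
      nlinarith [mul_pos hq0 ha, mul_pos (by linarith : (0:ℝ) < 1-q) hb]
    linarith
  intro h1 hh1 h2 hh2 h12
  obtain ⟨D1pos, D1eq⟩ := key h1 hh1
  obtain ⟨D2pos, D2eq⟩ := key h2 hh2
  rw [hCI h1, hCI h2, div_lt_div_iff₀ D1pos D2pos, D1eq, D2eq, hqa, hqa, hqv, hqv,
    hT, hT, hqa, hqa, hqv, hqv]
  have hP : 0 < 8*ρ0*μ*q*(1-q)*(h2-h1)*(xv-xa)^2 := by
    have := mul_pos (mul_pos (mul_pos (mul_pos (mul_pos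
      (by linarith : (0:ℝ) < 8*ρ0) hμpos) hq0) (by linarith : (0:ℝ) < 1-q))
      (by linarith : (0:ℝ) < h2-h1)) (pow_pos (by linarith : (0:ℝ) < xv-xa) 2)
    linarith [this]
  nlinarith [hP]
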